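/- Let c > 0 and M ≥ 0 be constants, and let Φ : (0,1) → ℝ be differentiable with Φ′(x) = b(x)·Φ(x) for all x ∈ (0,1), where b : (0,1) → ℝ is continuous and satisfies b(x) ≤ M + c/x for all x ∈ (0,1). If Φ(x)/x^c → 0 as x → 0⁺, then Φ(x) = 0 for all x ∈ (0,1). -/

import Mathlib

open Set Filter Real

theorem stmt_13 (c M : ℝ) (hc : 0 < c) (hM : 0 ≤ M) (Φ b : ℝ → ℝ)
    (hb : ContinuousOn b (Set.Ioo (0:ℝ) 1))
    (hbound : ∀ x ∈ Set.Ioo (0:ℝ) 1, b x ≤ M + c / x)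
    (hΦ : ∀ x ∈ Set.Ioo (0:ℝ) 1, HasDerivAt Φ (b x * Φ x) x)
    (hlim : Filter.Tendsto (fun x => Φ x / x ^ c)
      (nhdsWithin 0 (Set.Ioi 0)) (nhds 0)) :
    ∀ x ∈ Set.Ioo (0:ℝ) 1, Φ x = 0 := by
  set F : ℝ → ℝ := fun t => (Φ t)^2 * Real.exp (-(2*M)*t) * t ^ (-(2*c)) with hF
  -- derivative of F on (0,1)
  have hder : ∀ t ∈ Set.Ioo (0:ℝ) 1, HasDerivAt F
      (((Φ t)^2 * Real.exp (-(2*M)*t) * t ^ (-(2*c))) * (2*(b t) - 2*M - 2*c/t)) t := by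
    intro t ht
    have ht0 : (0:ℝ) < t := ht.1
    have h1 : HasDerivAt (fun s => (Φ s)^2) ((2:ℕ) * Φ t ^ (2-1) * (b t * Φ t)) t :=
      (hΦ t ht).pow 2
    have hin : HasDerivAt (fun s : ℝ => -(2*M)*s) (-(2*M)) t := by
      simpa using (hasDerivAt_id t).const_mul (-(2*M))
    have h2 : HasDerivAt (fun s => Real.exp (-(2*M)*s))
        (Real.exp (-(2*M)*t) * (-(2*M))) t := hin.exp
    have h3 : HasDerivAt (fun s : ℝ => s ^ (-(2*c)))
        ((-(2*c)) * t ^ (-(2*c) - 1)) t :=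
      Real.hasDerivAt_rpow_const (Or.inl (ne_of_gt ht0))
    have h := (h1.mul h2).mul h3
    convert h using 1
    · rfl
    · rfl
    · rfl
    have hts : t ^ (-(2*c) - 1) = t ^ (-(2*c)) * t⁻¹ := by
      rw [Real.rpow_sub ht0, Real.rpow_one, div_eq_mul_inv]
    rw [hts, Pi.mul_apply]
    field_simp
    ring
  intro x hx
  obtain ⟨hx0, hx1⟩ := hx
  -- F is antitone on [t, x] for 0 < t < x
  have hmono : ∀ t ∈ Set.Ioo (0:ℝ) x, F x ≤ F t := by
    intro t ht
    have hsub : Set.Icc t x ⊆ Set.Ioo (0:ℝ) 1 := fun s hs =>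
      ⟨lt_of_lt_of_le ht.1 hs.1, lt_of_le_of_lt hs.2 hx1⟩
    have hcont : ContinuousOn F (Set.Icc t x) := fun s hs =>
      ((hder s (hsub hs)).continuousAt).continuousWithinAt
    have hderiv : ∀ s ∈ interior (Set.Icc t x), deriv F s ≤ 0 := by
      intro s hs
      rw [interior_Icc] at hs
      have hs' : s ∈ Set.Ioo (0:ℝ) 1 := hsub ⟨hs.1.le, hs.2.le⟩
      rw [(hder s hs').deriv]
      have hK : 0 ≤ (Φ s)^2 * Real.exp (-(2*M)*s) * s ^ (-(2*c)) := by
        have := Real.rpow_nonneg (le_of_lt hs'.1) (-(2*c))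
        positivity
      have hneg : 2*(b s) - 2*M - 2*c/s ≤ 0 := by
        have h1 := hbound s hs'
        have h2 : 2*c/s = 2*(c/s) := by ring
        rw [h2]
        linarith
      exact mul_nonpos_of_nonneg_of_nonpos hK hneg
    have hanti : AntitoneOn F (Set.Icc t x) := by
      apply antitoneOn_of_deriv_nonpos (convex_Icc t x) hcont
      · intro s hs
        rw [interior_Icc] at hs
        exact ((hder s (hsub ⟨hs.1.le, hs.2.le⟩)).differentiableAt).differentiableWithinAt
      · exact hderiv
    exact hanti ⟨le_refl t, ht.2.le⟩ ⟨ht.2.le, le_refl x⟩ ht.2.le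
  -- F tends to 0 at 0⁺
  have htend : Filter.Tendsto F (nhdsWithin 0 (Set.Ioi 0)) (nhds 0) := by
    have heq : ∀ t ∈ Set.Ioi (0:ℝ), F t = (Φ t / t ^ c)^2 * Real.exp (-(2*M)*t) := by
      intro t ht
      have ht0 : (0:ℝ) < t := ht
      have h1 : t ^ (-(2*c)) = ((t ^ c)^2)⁻¹ := by
        rw [← Real.rpow_natCast (t ^ c) 2, ← Real.rpow_mul ht0.le, ← Real.rpow_neg ht0.le]
        norm_num
        ring_nf
      simp only [hF, h1, div_pow]
      field_simp
    have h2 : Filter.Tendsto (fun t => (Φ t / t ^ c)^2 * Real.exp (-(2*M)*t))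
        (nhdsWithin 0 (Set.Ioi 0)) (nhds 0) := by
      have ha : Filter.Tendsto (fun t => (Φ t / t ^ c)^2)
          (nhdsWithin 0 (Set.Ioi 0)) (nhds 0) := by
        simpa using hlim.pow 2
      have hb' : Filter.Tendsto (fun t : ℝ => Real.exp (-(2*M)*t))
          (nhdsWithin 0 (Set.Ioi 0)) (nhds 1) := by
        have hcont : Continuous (fun t : ℝ => Real.exp (-(2*M)*t)) :=
          Real.continuous_exp.comp (continuous_const.mul continuous_id)
        have := hcont.tendsto (0:ℝ)
        simp only [mul_zero, Real.exp_zero] at this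
        exact this.mono_left nhdsWithin_le_nhds
      simpa using ha.mul hb'
    exact h2.congr' (by
      filter_upwards [self_mem_nhdsWithin] with t ht
      exact (heq t ht).symm)
  -- conclude F x ≤ 0
  have hFx_le : F x ≤ 0 := by
    apply ge_of_tendsto htend
    filter_upwards [Ioo_mem_nhdsGT_of_mem (Set.mem_Ico.mpr ⟨le_refl 0, hx0⟩)] with t ht
    exact hmono t ht
  have hFx_ge : 0 ≤ F x := by
    have := Real.rpow_nonneg hx0.le (-(2*c))
    simp only [hF]
    positivity
  have hFx : F x = 0 := le_antisymm hFx_le hFx_ge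
  have hpos : 0 < Real.exp (-(2*M)*x) * x ^ (-(2*c)) := by
    have := Real.rpow_pos_of_pos hx0 (-(2*c))
    positivity
  have : (Φ x)^2 = 0 := by
    by_contra h
    have h2 : 0 < (Φ x)^2 := lt_of_le_of_ne (sq_nonneg _) (Ne.symm h)
    have : 0 < F x := by
      simp only [hF]
      rw [mul_assoc]
      exact mul_pos h2 hpos
    linarith [hFx]
  exact pow_eq_zero_iff (n := 2) (by norm_num) |>.mp this
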